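/- Let Y, U ∈ V be orthonormal (⟨Y,Y⟩ = ⟨U,U⟩ = 1, ⟨Y,U⟩ = 0). Then (1 − ⟨Y,X⟩)(1 − 2⟨Y,X⟩) + 2⟨U,X⟩² > 0, and consequently g_Y(Y,Y)·g_Y(U,U) − g_Y(Y,U)² > 0. -/

import Mathlib

open scoped RealInnerProductSpace

/-- The Matsumoto metric `F(y) = ⟨y,y⟩ / (√⟨y,y⟩ − ⟨X,y⟩)` associated to the
vector `X` of an inner product space. -/
noncomputable def matsumotoF {V : Type*} [NormedAddCommGroup V] [InnerProductSpace ℝ V]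
    (X y : V) : ℝ :=
  ⟪y, y⟫ / (Real.sqrt ⟪y, y⟫ - ⟪X, y⟫)

/-- The fundamental tensor of the Matsumoto metric:
`g_Y(U,W) = (1/2)·∂²/∂s∂t [F²(Y + sU + tW)]` at `s = t = 0`. -/
noncomputable def matsumotoG {V : Type*} [NormedAddCommGroup V] [InnerProductSpace ℝ V]
    (X Y U W : V) : ℝ :=
  (1 / 2) * deriv (fun s : ℝ =>
    deriv (fun t : ℝ => (matsumotoF X (Y + s • U + t • W)) ^ 2) 0) 0

namespace MatsumotoAux

lemma Dpos {a b : ℝ} (hab : a ^ 2 + b ^ 2 < 1 / 4) (u : ℝ) :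
    0 < Real.sqrt (1 + u ^ 2) - (a + u * b) := by
  have h1 : (a + u * b) ^ 2 ≤ (a ^ 2 + b ^ 2) * (1 + u ^ 2) := by
    nlinarith [sq_nonneg (a * u - b)]
  have hs1 : (1 : ℝ) ≤ Real.sqrt (1 + u ^ 2) := by
    have := Real.sqrt_le_sqrt (show (1:ℝ) ≤ 1 + u^2 by nlinarith [sq_nonneg u])
    simpa using this
  have h2 : a + u * b ≤ |a + u * b| := le_abs_self _
  have h3 : |a + u * b| = Real.sqrt ((a + u * b) ^ 2) := (Real.sqrt_sq_eq_abs _).symm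
  have h4 : Real.sqrt ((a + u * b) ^ 2) ≤ Real.sqrt ((a ^ 2 + b ^ 2) * (1 + u ^ 2)) :=
    Real.sqrt_le_sqrt h1
  have h5 : Real.sqrt ((a ^ 2 + b ^ 2) * (1 + u ^ 2))
      < Real.sqrt ((1/4) * (1 + u ^ 2)) := by
    apply Real.sqrt_lt_sqrt (by positivity)
    nlinarith [sq_nonneg u]
  have h6 : Real.sqrt ((1/4) * (1 + u ^ 2)) = (1/2) * Real.sqrt (1 + u ^ 2) := by
    rw [Real.sqrt_mul (by norm_num), show (1/4 : ℝ) = (1/2)^2 by norm_num,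
      Real.sqrt_sq (by norm_num)]
  nlinarith [h2, h3, h4, h5, h6, hs1]

/-- scalar Matsumoto F² along `Y + u•U`. -/
noncomputable def msf (a b u : ℝ) : ℝ :=
  ((1 + u ^ 2) / (Real.sqrt (1 + u ^ 2) - (a + u * b))) ^ 2

noncomputable def msf' (a b u : ℝ) : ℝ :=
  (2 * (1 + u ^ 2) * (2 * u * (Real.sqrt (1 + u ^ 2) - (a + u * b))
      - (1 + u ^ 2) * (u / Real.sqrt (1 + u ^ 2) - b)))
    / (Real.sqrt (1 + u ^ 2) - (a + u * b)) ^ 3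

lemma hasDerivAt_msf {a b : ℝ} (hD : ∀ u : ℝ, 0 < Real.sqrt (1 + u ^ 2) - (a + u * b))
    (u : ℝ) : HasDerivAt (msf a b) (msf' a b u) u := by
  have hQpos : (0:ℝ) < 1 + u ^ 2 := by positivity
  have hSpos : 0 < Real.sqrt (1 + u ^ 2) := Real.sqrt_pos.mpr hQpos
  have hSsq : Real.sqrt (1 + u ^ 2) ^ 2 = 1 + u ^ 2 := Real.sq_sqrt hQpos.le
  have hDne : Real.sqrt (1 + u ^ 2) - (a + u * b) ≠ 0 := (hD u).ne'
  have hQ : HasDerivAt (fun u : ℝ => 1 + u ^ 2) (2 * u) u := by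
    simpa using ((hasDerivAt_pow 2 u).const_add 1)
  have hS : HasDerivAt (fun u : ℝ => Real.sqrt (1 + u ^ 2))
      (2 * u / (2 * Real.sqrt (1 + u ^ 2))) u := hQ.sqrt hQpos.ne'
  have hL : HasDerivAt (fun u : ℝ => a + u * b) b u := by
    simpa using ((hasDerivAt_id u).mul_const b).const_add a
  have hDD : HasDerivAt (fun u : ℝ => Real.sqrt (1 + u ^ 2) - (a + u * b))
      (2 * u / (2 * Real.sqrt (1 + u ^ 2)) - b) u := hS.sub hL
  have hF : HasDerivAt (fun u : ℝ => (1 + u ^ 2) / (Real.sqrt (1 + u ^ 2) - (a + u * b)))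
      ((2 * u * (Real.sqrt (1 + u ^ 2) - (a + u * b)) -
        (1 + u ^ 2) * (2 * u / (2 * Real.sqrt (1 + u ^ 2)) - b)) /
        (Real.sqrt (1 + u ^ 2) - (a + u * b)) ^ 2) u := hQ.div hDD hDne
  have := hF.fun_pow 2
  refine this.congr_deriv (Eq.symm ?_)
  set S := Real.sqrt (1 + u ^ 2)
  rw [msf']
  have h2 : 2 * u / (2 * S) = u / S := by
    rw [mul_div_mul_left _ _ (two_ne_zero)]
  rw [h2]
  change 2 * (1 + u ^ 2) * (2 * u * (S - (a + u * b)) - (1 + u ^ 2) * (u / S - b)) /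
    (S - (a + u * b)) ^ 3 = _
  norm_num
  field_simp

lemma hasDerivAt_msf' {a b : ℝ} (ha : a < 1) :
    HasDerivAt (msf' a b) ((2 * (1 - 2 * a) * (1 - a) + 6 * b ^ 2) / (1 - a) ^ 4) 0 := by
  have hQ : HasDerivAt (fun u : ℝ => 1 + u ^ 2) (2 * 0) 0 := by
    simpa using ((hasDerivAt_pow 2 (0:ℝ)).const_add 1)
  have hQ0 : HasDerivAt (fun u : ℝ => 1 + u ^ 2) 0 0 := by simpa using hQ
  have hS : HasDerivAt (fun u : ℝ => Real.sqrt (1 + u ^ 2)) 0 0 := by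
    have := hQ0.sqrt (by norm_num : (1:ℝ) + 0 ^ 2 ≠ 0)
    simpa using this
  have hL : HasDerivAt (fun u : ℝ => a + u * b) b 0 := by
    simpa using ((hasDerivAt_id (0:ℝ)).mul_const b).const_add a
  have hDD : HasDerivAt (fun u : ℝ => Real.sqrt (1 + u ^ 2) - (a + u * b)) (0 - b) 0 :=
    hS.sub hL
  have hios : HasDerivAt (fun u : ℝ => u / Real.sqrt (1 + u ^ 2)) 1 0 := by
    have := (hasDerivAt_id (0:ℝ)).fun_div hS (by norm_num)
    simpa using this
  have hin : HasDerivAt (fun u : ℝ => u / Real.sqrt (1 + u ^ 2) - b) 1 0 := by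
    simpa using hios.sub_const b
  have h2u : HasDerivAt (fun u : ℝ => 2 * u) 2 0 := by
    simpa using (hasDerivAt_id (0:ℝ)).const_mul 2
  have h2uD : HasDerivAt (fun u : ℝ => 2 * u * (Real.sqrt (1 + u ^ 2) - (a + u * b)))
      (2 * (1 - a)) 0 := by
    have := h2u.fun_mul hDD
    norm_num at this ⊢
    convert this using 1
  have hQin : HasDerivAt (fun u : ℝ => (1 + u ^ 2) * (u / Real.sqrt (1 + u ^ 2) - b)) 1 0 := by
    have := hQ0.fun_mul hin
    norm_num at this ⊢
    convert this using 1
  have hP : HasDerivAt (fun u : ℝ => 2 * u * (Real.sqrt (1 + u ^ 2) - (a + u * b))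
      - (1 + u ^ 2) * (u / Real.sqrt (1 + u ^ 2) - b)) (2 * (1 - a) - 1) 0 :=
    h2uD.sub hQin
  have h2Q : HasDerivAt (fun u : ℝ => 2 * (1 + u ^ 2)) 0 0 := by
    simpa using hQ0.const_mul 2
  have hM := h2Q.mul hP
  have hDen := hDD.pow 3
  have hden_ne : ((fun u : ℝ => Real.sqrt (1 + u ^ 2) - (a + u * b)) 0) ^ 3 ≠ 0 := by
    norm_num
    intro h
    nlinarith [h]
  have hfinal := hM.div hDen (by
    show ((fun u : ℝ => Real.sqrt (1 + u ^ 2) - (a + u * b)) 0) ^ 3 ≠ 0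
    exact hden_ne)
  have key : HasDerivAt (msf' a b) _ 0 := hfinal
  convert key using 1
  have h1a : (1:ℝ) - a ≠ 0 := by linarith
  norm_num [Real.sqrt_one]
  field_simp
  ring

/-- derivative at `t = 0` of `t ↦ ((c²+t²)/(√(c²+t²) − (ca+tb)))²`. -/
lemma hasDerivAt_YYU {a b c : ℝ} (hc : 0 < c) (ha : a < 1) :
    HasDerivAt (fun t : ℝ => ((c ^ 2 + t ^ 2) /
        (Real.sqrt (c ^ 2 + t ^ 2) - (c * a + t * b))) ^ 2)
      (2 * b * c / (1 - a) ^ 3) 0 := by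
  have hsq : Real.sqrt (c ^ 2 + 0 ^ 2) = c := by
    norm_num [Real.sqrt_sq hc.le]
  have hQ : HasDerivAt (fun t : ℝ => c ^ 2 + t ^ 2) 0 0 := by
    simpa using ((hasDerivAt_pow 2 (0:ℝ)).const_add (c ^ 2))
  have hQne : c ^ 2 + (0:ℝ) ^ 2 ≠ 0 := by positivity
  have hS : HasDerivAt (fun t : ℝ => Real.sqrt (c ^ 2 + t ^ 2)) 0 0 := by
    have := hQ.sqrt hQne
    simpa using this
  have hL : HasDerivAt (fun t : ℝ => c * a + t * b) b 0 := by
    simpa using ((hasDerivAt_id (0:ℝ)).mul_const b).const_add (c * a)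
  have hDD : HasDerivAt (fun t : ℝ => Real.sqrt (c ^ 2 + t ^ 2) - (c * a + t * b)) (0 - b) 0 :=
    hS.sub hL
  have hDne : Real.sqrt (c ^ 2 + (0:ℝ) ^ 2) - (c * a + 0 * b) ≠ 0 := by
    rw [hsq]
    have : 0 < c * (1 - a) := mul_pos hc (by linarith)
    intro h; nlinarith [h]
  have hF := hQ.div hDD (by simpa using hDne)
  have := hF.fun_pow 2
  refine this.congr_deriv (Eq.symm ?_)
  have h1a : (1:ℝ) - a ≠ 0 := by linarith
  have hden : c - c * a ≠ 0 := by
    have : 0 < c * (1 - a) := mul_pos hc (by linarith)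
    intro h; nlinarith [h]
  norm_num [Real.sqrt_sq hc.le]
  field_simp [hden]

/-- simplification of F² along the ray direction. -/
lemma YYY_simp {a : ℝ} (ha : a < 1) {c : ℝ} (hc : 0 < c) (b : ℝ) :
    ((c ^ 2 + 0 ^ 2) / (Real.sqrt (c ^ 2 + 0 ^ 2) - (c * a + 0 * b))) ^ 2
      = (c / (1 - a)) ^ 2 := by
  have hsq : Real.sqrt (c ^ 2 + 0 ^ 2) = c := by
    norm_num [Real.sqrt_sq hc.le]
  have hden : c - c * a ≠ 0 := by
    have : 0 < c * (1 - a) := mul_pos hc (by linarith)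
    intro h; nlinarith [h]
  rw [hsq]
  norm_num
  rw [show c - c * a = c * (1 - a) by ring, show c ^ 2 = c * c by ring,
    mul_div_mul_left _ _ hc.ne']

end MatsumotoAux

open MatsumotoAux

lemma matsumotoF_eval {V : Type*} [NormedAddCommGroup V] [InnerProductSpace ℝ V]
    (X Y U : V) (hY : ⟪Y, Y⟫ = 1) (hU : ⟪U, U⟫ = 1) (hYU : ⟪Y, U⟫ = 0) (p q : ℝ) :
    matsumotoF X (p • Y + q • U) =
      (p ^ 2 + q ^ 2) / (Real.sqrt (p ^ 2 + q ^ 2) - (p * ⟪X, Y⟫ + q * ⟪X, U⟫)) := by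
  have hUY : ⟪U, Y⟫ = (0:ℝ) := by rw [real_inner_comm]; exact hYU
  have h1 : ⟪p • Y + q • U, p • Y + q • U⟫ = p ^ 2 + q ^ 2 := by
    simp [inner_add_left, inner_add_right, real_inner_smul_left, real_inner_smul_right,
      hY, hU, hYU, hUY, -inner_self_eq_norm_sq_to_K]
    ring
  have h2 : ⟪X, p • Y + q • U⟫ = p * ⟪X, Y⟫ + q * ⟪X, U⟫ := by
    simp [inner_add_right, real_inner_smul_right]
  rw [matsumotoF, h1, h2]

set_option maxHeartbeats 1000000 in
theorem matsumotoG_det_pos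
    {V : Type*} [NormedAddCommGroup V] [InnerProductSpace ℝ V] [FiniteDimensional ℝ V]
    (X : V) (hX : ‖X‖ < 1 / 2) (Y U : V)
    (hY : ⟪Y, Y⟫ = 1) (hU : ⟪U, U⟫ = 1) (hYU : ⟪Y, U⟫ = 0) :
    0 < (1 - ⟪Y, X⟫) * (1 - 2 * ⟪Y, X⟫) + 2 * ⟪U, X⟫ ^ 2 ∧
    0 < matsumotoG X Y Y Y * matsumotoG X Y U U - matsumotoG X Y Y U ^ 2 := by
  obtain ⟨a, ha_def⟩ : ∃ x : ℝ, ⟪X, Y⟫ = x := ⟨_, rfl⟩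
  obtain ⟨b, hb_def⟩ : ∃ x : ℝ, ⟪X, U⟫ = x := ⟨_, rfl⟩
  have hYX : ⟪Y, X⟫ = a := by rw [real_inner_comm, ha_def]
  have hUX : ⟪U, X⟫ = b := by rw [real_inner_comm, hb_def]
  have hUY : ⟪U, Y⟫ = (0:ℝ) := by rw [real_inner_comm]; exact hYU
  -- a² + b² < 1/4
  have hab : a ^ 2 + b ^ 2 < 1 / 4 := by
    have h0 : (0:ℝ) ≤ ⟪X - a • Y - b • U, X - a • Y - b • U⟫ := real_inner_self_nonneg
    have hXX : ⟪X, X⟫ = ‖X‖ ^ 2 := real_inner_self_eq_norm_sq X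
    have hexp : ⟪X - a • Y - b • U, X - a • Y - b • U⟫
        = ‖X‖ ^ 2 - a ^ 2 - b ^ 2 := by
      simp [inner_sub_left, inner_sub_right, real_inner_smul_left, real_inner_smul_right,
        hY, hU, hYU, hUY, real_inner_comm X Y, real_inner_comm X U, hXX, ha_def, hb_def,
        -inner_self_eq_norm_sq_to_K]
      ring
    rw [hexp] at h0
    have hXn : 0 ≤ ‖X‖ := norm_nonneg X
    nlinarith [hX, hXn]
  have ha1 : a < 1 := by nlinarith [sq_nonneg b]
  have ha1' : (0:ℝ) < 1 - a := by linarith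
  have h1a : (1:ℝ) - a ≠ 0 := ha1'.ne'
  have hD := Dpos hab
  -- G(Y,Y) = 1/(1-a)²
  have hGYY : matsumotoG X Y Y Y = 1 / (1 - a) ^ 2 := by
    rw [matsumotoG]
    have houter : (fun s : ℝ => deriv (fun t : ℝ =>
        (matsumotoF X (Y + s • Y + t • Y)) ^ 2) 0)
        =ᶠ[nhds 0] (fun s : ℝ => 2 * (1 + s) / (1 - a) ^ 2) := by
      filter_upwards [eventually_gt_nhds (show (-1:ℝ) < 0 by norm_num)] with s hs
      have hinner : (fun t : ℝ => (matsumotoF X (Y + s • Y + t • Y)) ^ 2)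
          =ᶠ[nhds 0] (fun t : ℝ => ((1 + s + t) / (1 - a)) ^ 2) := by
        filter_upwards [eventually_gt_nhds (show -(1+s) < (0:ℝ) by linarith)] with t ht
        have hc : 0 < 1 + s + t := by linarith
        have harg : Y + s • Y + t • Y = (1 + s + t) • Y + (0:ℝ) • U := by module
        rw [harg, matsumotoF_eval X Y U hY hU hYU, ha_def, hb_def]
        exact YYY_simp ha1 hc b
      rw [hinner.deriv_eq]
      have : HasDerivAt (fun t : ℝ => ((1 + s + t) / (1 - a)) ^ 2)
          (2 * (1 + s) / (1 - a) ^ 2) 0 := by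
        have h1 : HasDerivAt (fun t : ℝ => (1 + s + t) / (1 - a)) (1 / (1 - a)) 0 := by
          simpa using ((hasDerivAt_id (0:ℝ)).const_add (1 + s)).div_const (1 - a)
        have := h1.fun_pow 2
        refine this.congr_deriv (Eq.symm ?_)
        norm_num
        field_simp
      exact this.deriv
    rw [houter.deriv_eq]
    have : HasDerivAt (fun s : ℝ => 2 * (1 + s) / (1 - a) ^ 2) (2 / (1 - a) ^ 2) 0 := by
      have h1 : HasDerivAt (fun s : ℝ => 2 * (1 + s)) 2 0 := by
        simpa using ((hasDerivAt_id (0:ℝ)).const_add 1).const_mul 2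
      simpa using h1.div_const ((1 - a) ^ 2)
    rw [this.deriv]
    ring
  -- G(Y,U) (i.e. matsumotoG X Y Y U) = b/(1-a)³
  have hGYU : matsumotoG X Y Y U = b / (1 - a) ^ 3 := by
    rw [matsumotoG]
    have houter : (fun s : ℝ => deriv (fun t : ℝ =>
        (matsumotoF X (Y + s • Y + t • U)) ^ 2) 0)
        =ᶠ[nhds 0] (fun s : ℝ => 2 * b * (1 + s) / (1 - a) ^ 3) := by
      filter_upwards [eventually_gt_nhds (show (-1:ℝ) < 0 by norm_num)] with s hs
      have hc : 0 < 1 + s := by linarith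
      have heq : (fun t : ℝ => (matsumotoF X (Y + s • Y + t • U)) ^ 2)
          = (fun t : ℝ => (((1 + s) ^ 2 + t ^ 2) /
              (Real.sqrt ((1 + s) ^ 2 + t ^ 2) - ((1 + s) * a + t * b))) ^ 2) := by
        funext t
        have harg : Y + s • Y + t • U = (1 + s) • Y + t • U := by module
        rw [harg, matsumotoF_eval X Y U hY hU hYU, ha_def, hb_def]
      rw [heq]
      exact (hasDerivAt_YYU hc ha1).deriv
    rw [houter.deriv_eq]
    have : HasDerivAt (fun s : ℝ => 2 * b * (1 + s) / (1 - a) ^ 3) (2 * b / (1 - a) ^ 3) 0 := by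
      have h1 : HasDerivAt (fun s : ℝ => 2 * b * (1 + s)) (2 * b) 0 := by
        simpa using ((hasDerivAt_id (0:ℝ)).const_add 1).const_mul (2 * b)
      simpa using h1.div_const ((1 - a) ^ 3)
    rw [this.deriv]
    ring
  -- G(U,U) = ((1-a)(1-2a) + 3b²)/(1-a)⁴
  have hGUU : matsumotoG X Y U U = ((1 - a) * (1 - 2 * a) + 3 * b ^ 2) / (1 - a) ^ 4 := by
    rw [matsumotoG]
    have houter : (fun s : ℝ => deriv (fun t : ℝ =>
        (matsumotoF X (Y + s • U + t • U)) ^ 2) 0) = msf' a b := by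
      funext s
      have heq : (fun t : ℝ => (matsumotoF X (Y + s • U + t • U)) ^ 2)
          = (fun t : ℝ => msf a b (s + t)) := by
        funext t
        have harg : Y + s • U + t • U = (1:ℝ) • Y + (s + t) • U := by module
        rw [harg, matsumotoF_eval X Y U hY hU hYU, ha_def, hb_def, msf]
        norm_num
      rw [heq]
      have hcomp : HasDerivAt (fun t : ℝ => msf a b (s + t)) (msf' a b s) 0 := by
        have hg : HasDerivAt (fun t : ℝ => s + t) 1 0 := by
          simpa using (hasDerivAt_id (0:ℝ)).const_add s
        have hf : HasDerivAt (msf a b) (msf' a b (s + 0)) (s + 0) := hasDerivAt_msf hD (s + 0)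
        have := HasDerivAt.comp (0:ℝ) hf hg
        simpa [Function.comp_def] using this
      exact hcomp.deriv
    rw [houter]
    rw [(hasDerivAt_msf' ha1).deriv]
    field_simp
    ring
  constructor
  · rw [hYX, hUX]
    nlinarith [sq_nonneg b]
  · rw [hGYY, hGYU, hGUU]
    have key : 1 / (1 - a) ^ 2 * (((1 - a) * (1 - 2 * a) + 3 * b ^ 2) / (1 - a) ^ 4)
        - (b / (1 - a) ^ 3) ^ 2
        = ((1 - a) * (1 - 2 * a) + 2 * b ^ 2) / (1 - a) ^ 6 := by
      field_simp
      ring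
    rw [key]
    apply div_pos
    · nlinarith [sq_nonneg b]
    · positivity
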